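/- arXiv:1309.7579 — 2 statements merged into one kernel-verified Lean document; each statement's English description precedes it below -/
import Mathlib

section
/- For every ε > 0 there exists n₀ such that for all n ≥ n₀, every prime p, and every brick B = [X, Y, Z] in the Heisenberg group H_n over F_p with |B| > |H_n|^(3/4 + ε), the product set B·B contains at least |B|/p many cosets of the center [0, 0, F_p] of H_n. -/
open Finset Complex

namespace StmtAux

variable {p : ℕ} [Fact p.Prime]

local notation "ee" => ZMod.stdAddChar (N := p)

lemma conj_psi (x : ZMod p) : (starRingEnd ℂ) (ee x) = ee (-x) := by
  rw [ZMod.stdAddChar_apply, ZMod.stdAddChar_apply, ← Circle.coe_inv_eq_conj,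
    ← AddChar.map_neg_eq_inv]

lemma abs_psi (x : ZMod p) : ‖ee x‖ = 1 := by
  rw [ZMod.stdAddChar_apply]; exact Circle.norm_coe _

lemma orth (c : ZMod p) : ∑ x : ZMod p, ee (x * c) = if c = 0 then (p : ℂ) else 0 := by
  have := AddChar.sum_mulShift (ψ := ee) c (ZMod.isPrimitive_stdAddChar p)
  rw [ZMod.card] at this; rw [this]; split <;> simp

end StmtAux

namespace StmtAux
variable {p : ℕ} [Fact p.Prime]
local notation "ee" => ZMod.stdAddChar (N := p)

lemma second_moment (W : Finset (ZMod p)) {d : ZMod p} (hd : d ≠ 0) :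
    ∑ a : ZMod p, ‖∑ w ∈ W, ee (a * (d * w))‖ ^ 2 = p * W.card := by
  have key : ∑ a : ZMod p, ((∑ w ∈ W, ee (a * (d * w))) *
      (starRingEnd ℂ) (∑ w ∈ W, ee (a * (d * w)))) = ((p : ℂ) * W.card) := by
    have h1 : ∀ a : ZMod p, ((∑ w ∈ W, ee (a * (d * w))) *
        (starRingEnd ℂ) (∑ w ∈ W, ee (a * (d * w)))) =
        ∑ w ∈ W, ∑ w' ∈ W, ee (a * (d * (w - w'))) := by
      intro a
      rw [map_sum, Finset.sum_mul_sum]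
      refine Finset.sum_congr rfl fun w _ => Finset.sum_congr rfl fun w' _ => ?_
      rw [conj_psi, ← AddChar.map_add_eq_mul]
      ring_nf
    simp_rw [h1]
    rw [Finset.sum_comm]
    have h2 : ∀ w ∈ W, ∑ a : ZMod p, ∑ w' ∈ W, ee (a * (d * (w - w'))) =
        (p : ℂ) := by
      intro w hw
      rw [Finset.sum_comm]
      have h3 : ∀ w' ∈ W, ∑ a : ZMod p, ee (a * (d * (w - w'))) =
          if w' = w then (p : ℂ) else 0 := by
        intro w' _
        rw [orth]
        congr 1
        simp only [mul_eq_zero, sub_eq_zero, eq_iff_iff]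
        constructor
        · rintro (h | h); · exact absurd h hd
          · exact h.symm
        · intro h; right; rw [h]
      rw [Finset.sum_congr rfl h3, Finset.sum_ite_eq' W w (fun _ => (p : ℂ)), if_pos hw]
    rw [Finset.sum_congr rfl h2, Finset.sum_const, nsmul_eq_mul, mul_comm]
  have h4 : ∀ a : ZMod p, ((∑ w ∈ W, ee (a * (d * w))) *
      (starRingEnd ℂ) (∑ w ∈ W, ee (a * (d * w)))) =
      ((‖∑ w ∈ W, ee (a * (d * w))‖ ^ 2 : ℝ) : ℂ) := by
    intro a
    rw [Complex.mul_conj, Complex.sq_norm]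
  rw [Finset.sum_congr rfl (fun a _ => h4 a), ← Complex.ofReal_sum] at key
  exact_mod_cast key
end StmtAux

namespace StmtAux
variable {p : ℕ} [Fact p.Prime]
local notation "ee" => ZMod.stdAddChar (N := p)

lemma Sbound (A B : Finset (ZMod p)) {c : ZMod p} (hc : c ≠ 0) :
    ‖∑ a ∈ A, ∑ b ∈ B, ee (c * (a * b))‖ ^ 2 ≤ (p : ℝ) * A.card * B.card := by
  have e1 : ‖∑ a ∈ A, ∑ b ∈ B, ee (c * (a * b))‖ ≤
      ∑ a ∈ A, ‖∑ b ∈ B, ee (c * (a * b))‖ := by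
    simpa using norm_sum_le A (fun a => ∑ b ∈ B, ee (c * (a * b)))
  have e2 : (∑ a ∈ A, ‖∑ b ∈ B, ee (c * (a * b))‖) ^ 2 ≤
      (A.card : ℝ) * ∑ a ∈ A, ‖∑ b ∈ B, ee (c * (a * b))‖ ^ 2 :=
    sq_sum_le_card_mul_sum_sq
  have e3 : (∑ a ∈ A, ‖∑ b ∈ B, ee (c * (a * b))‖ ^ 2) ≤
      ∑ a : ZMod p, ‖∑ b ∈ B, ee (c * (a * b))‖ ^ 2 :=
    Finset.sum_le_univ_sum_of_nonneg (fun a => by positivity)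
  have e4 : ∑ a : ZMod p, ‖∑ b ∈ B, ee (c * (a * b))‖ ^ 2 =
      (p : ℝ) * B.card := by
    have := second_moment B hc
    simpa [mul_left_comm, mul_comm, mul_assoc] using this
  calc ‖∑ a ∈ A, ∑ b ∈ B, ee (c * (a * b))‖ ^ 2
      ≤ (∑ a ∈ A, ‖∑ b ∈ B, ee (c * (a * b))‖) ^ 2 := by
        have := norm_nonneg (∑ a ∈ A, ∑ b ∈ B, ee (c * (a * b)))
        exact pow_le_pow_left₀ this e1 2
    _ ≤ (A.card : ℝ) * ∑ a ∈ A, ‖∑ b ∈ B, ee (c * (a * b))‖ ^ 2 := e2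
    _ ≤ (A.card : ℝ) * ((p : ℝ) * B.card) := by
        refine mul_le_mul_of_nonneg_left (e3.trans e4.le) (by positivity)
    _ = (p : ℝ) * A.card * B.card := by ring

lemma parseval_le (Z : Finset (ZMod p)) (s : Finset (ZMod p)) :
    ∑ c ∈ s, ‖∑ z ∈ Z, ee (c * z)‖ ^ 2 ≤ (p : ℝ) * Z.card := by
  have h1 : ∑ c : ZMod p, ‖∑ z ∈ Z, ee (c * z)‖ ^ 2 = (p : ℝ) * Z.card := by
    have := second_moment Z (d := 1) one_ne_zero
    simpa using this
  rw [← h1]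
  exact Finset.sum_le_univ_sum_of_nonneg (fun a => by positivity)

end StmtAux

namespace StmtAux
variable {p : ℕ} [Fact p.Prime]
local notation "ee" => ZMod.stdAddChar (N := p)

lemma psi_sum {ι : Type*} (s : Finset ι) (f : ι → ZMod p) :
    ee (∑ i ∈ s, f i) = ∏ i ∈ s, ee (f i) := by
  classical
  induction s using Finset.cons_induction with
  | empty => simp [AddChar.map_zero_eq_one]
  | cons i s hi ih => rw [Finset.sum_cons, Finset.prod_cons, AddChar.map_add_eq_mul, ih]

lemma cover {n : ℕ} (A B : Fin n → Finset (ZMod p)) (Z : Finset (ZMod p))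
    (h : (p : ℝ) ^ (n + 2) < (∏ i, ((A i).card : ℝ) * ((B i).card : ℝ)) * (Z.card : ℝ) ^ 2)
    (t : ZMod p) :
    ∃ a b : Fin n → ZMod p, (∀ i, a i ∈ A i) ∧ (∀ i, b i ∈ B i) ∧
      ∃ z ∈ Z, ∃ w ∈ Z, (∑ i, a i * b i) + z + w = t := by
  classical
  by_contra hcon
  push_neg at hcon
  set T : ZMod p → ℂ := fun c => ∑ z ∈ Z, ee (c * z) with hT
  set S : Fin n → ZMod p → ℂ := fun i c => ∑ x ∈ A i, ∑ y ∈ B i, ee (c * (x * y)) with hSdef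
  set pA := Fintype.piFinset A with hpA
  set pB := Fintype.piFinset B with hpB
  -- factorization for a fixed character
  have hfact : ∀ c : ZMod p,
      ∑ a ∈ pA, ∑ b ∈ pB, ∑ z ∈ Z, ∑ w ∈ Z,
        ee (c * ((∑ i, a i * b i) + z + w - t))
      = ee (c * (-t)) * ((∏ i, S i c) * (T c * T c)) := by
    intro c
    have hterm : ∀ (a b : Fin n → ZMod p) (z w : ZMod p),
        ee (c * ((∑ i, a i * b i) + z + w - t)) =
        (ee (c * z) * ee (c * w)) * (ee (c * (-t)) * ∏ i, ee (c * (a i * b i))) := by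
      intro a b z w
      rw [← psi_sum Finset.univ (fun i => c * (a i * b i)), ← AddChar.map_add_eq_mul,
        ← AddChar.map_add_eq_mul, ← AddChar.map_add_eq_mul, ← Finset.mul_sum]
      congr 1
      ring
    simp_rw [hterm]
    have h1 : ∀ (a b : Fin n → ZMod p), ∑ z ∈ Z, ∑ w ∈ Z,
        (ee (c * z) * ee (c * w)) * (ee (c * (-t)) * ∏ i, ee (c * (a i * b i)))
        = (T c * T c) * (ee (c * (-t)) * ∏ i, ee (c * (a i * b i))) := by
      intro a b
      simp_rw [← Finset.sum_mul]
      congr 1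
      rw [← Finset.sum_mul_sum]
    simp_rw [h1, ← Finset.mul_sum]
    have h2 : (∑ a ∈ pA, ∑ b ∈ pB, ∏ i, ee (c * (a i * b i))) = ∏ i, S i c := by
      simp only [hSdef, hpA, hpB]
      rw [Finset.prod_univ_sum]
      refine (Finset.sum_congr rfl fun a _ => ?_)
      rw [Finset.prod_univ_sum]
    rw [h2]
    ring
  -- the key vanishing identity
  have key : ∑ c : ZMod p, ee (c * (-t)) * ((∏ i, S i c) * (T c * T c)) = 0 := by
    have hswap : ∑ c : ZMod p, ∑ a ∈ pA, ∑ b ∈ pB, ∑ z ∈ Z, ∑ w ∈ Z,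
        ee (c * ((∑ i, a i * b i) + z + w - t))
        = ∑ a ∈ pA, ∑ b ∈ pB, ∑ z ∈ Z, ∑ w ∈ Z, ∑ c : ZMod p,
          ee (c * ((∑ i, a i * b i) + z + w - t)) := by
      rw [Finset.sum_comm]
      refine Finset.sum_congr rfl fun a _ => ?_
      rw [Finset.sum_comm]
      refine Finset.sum_congr rfl fun b _ => ?_
      rw [Finset.sum_comm]
      refine Finset.sum_congr rfl fun z _ => ?_
      rw [Finset.sum_comm]
    calc ∑ c : ZMod p, ee (c * (-t)) * ((∏ i, S i c) * (T c * T c))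
        = ∑ c : ZMod p, ∑ a ∈ pA, ∑ b ∈ pB, ∑ z ∈ Z, ∑ w ∈ Z,
            ee (c * ((∑ i, a i * b i) + z + w - t)) :=
          (Finset.sum_congr rfl fun c _ => (hfact c).symm)
      _ = ∑ a ∈ pA, ∑ b ∈ pB, ∑ z ∈ Z, ∑ w ∈ Z, ∑ c : ZMod p,
            ee (c * ((∑ i, a i * b i) + z + w - t)) := hswap
      _ = 0 := by
          refine Finset.sum_eq_zero fun a ha => Finset.sum_eq_zero fun b hb =>
            Finset.sum_eq_zero fun z hz => Finset.sum_eq_zero fun w hw => ?_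
          rw [orth]
          rw [if_neg]
          intro hEq
          rw [sub_eq_zero] at hEq
          exact hcon a b (fun i => Fintype.mem_piFinset.mp ha i)
            (fun i => Fintype.mem_piFinset.mp hb i) z hz w hw hEq
  -- evaluate the `c = 0` term
  set P : ℝ := ∏ i, ((A i).card : ℝ) * ((B i).card : ℝ) with hP
  set Mr : ℝ := P * (Z.card : ℝ) ^ 2 with hMr
  have hzero : ee ((0 : ZMod p) * (-t)) * ((∏ i, S i 0) * (T 0 * T 0)) = ((Mr : ℝ) : ℂ) := by
    have hS0 : ∀ i, S i 0 = ((A i).card : ℂ) * ((B i).card : ℂ) := by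
      intro i
      simp [hSdef, AddChar.map_zero_eq_one, Finset.sum_const, mul_comm]
    have hT0 : T 0 = (Z.card : ℂ) := by
      simp [hT, AddChar.map_zero_eq_one]
    rw [hT0]
    rw [Finset.prod_congr rfl fun i _ => hS0 i]
    simp only [zero_mul, AddChar.map_zero_eq_one, one_mul, hMr, hP]
    push_cast
    ring
  have hMpos : 0 < Mr := lt_of_le_of_lt (by positivity) h
  have hsplit : ((Mr : ℝ) : ℂ) =
      - ∑ c ∈ Finset.univ.erase (0 : ZMod p), ee (c * (-t)) * ((∏ i, S i c) * (T c * T c)) := by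
    have h5 := Finset.add_sum_erase Finset.univ
      (fun c : ZMod p => ee (c * (-t)) * ((∏ i, S i c) * (T c * T c))) (Finset.mem_univ (0 : ZMod p))
    rw [key] at h5
    rw [← hzero]
    linear_combination h5
  set Q : ℝ := ∏ i, Real.sqrt ((p : ℝ) * (A i).card * (B i).card) with hQ
  have hQnonneg : 0 ≤ Q := Finset.prod_nonneg fun i _ => Real.sqrt_nonneg _
  have habs : Mr ≤ Q * ((p : ℝ) * Z.card) := by
    have hb : ∀ c ∈ Finset.univ.erase (0 : ZMod p),
        ‖ee (c * (-t)) * ((∏ i, S i c) * (T c * T c))‖ ≤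
          Q * ‖T c‖ ^ 2 := by
      intro c hc
      have hc0 : c ≠ 0 := Finset.ne_of_mem_erase hc
      rw [norm_mul, norm_mul, norm_mul, abs_psi, one_mul]
      have hprod : ‖∏ i, S i c‖ ≤ Q := by
        rw [norm_prod]
        refine Finset.prod_le_prod (fun i _ => norm_nonneg _) (fun i _ => ?_)
        exact Real.le_sqrt_of_sq_le (Sbound (A i) (B i) hc0)
      calc ‖∏ i, S i c‖ * (‖T c‖ * ‖T c‖)
          ≤ Q * (‖T c‖ * ‖T c‖) := by
            refine mul_le_mul_of_nonneg_right hprod (by positivity)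
        _ = Q * ‖T c‖ ^ 2 := by ring
    calc Mr = ‖((Mr : ℝ) : ℂ)‖ := by
          rw [Complex.norm_real, Real.norm_eq_abs, abs_of_pos hMpos]
      _ = ‖∑ c ∈ Finset.univ.erase (0 : ZMod p),
            ee (c * (-t)) * ((∏ i, S i c) * (T c * T c))‖ := by rw [hsplit, norm_neg]
      _ ≤ ∑ c ∈ Finset.univ.erase (0 : ZMod p),
            ‖ee (c * (-t)) * ((∏ i, S i c) * (T c * T c))‖ := by
          simpa using norm_sum_le (Finset.univ.erase (0 : ZMod p))
            (fun c => ee (c * (-t)) * ((∏ i, S i c) * (T c * T c)))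
      _ ≤ ∑ c ∈ Finset.univ.erase (0 : ZMod p), Q * ‖T c‖ ^ 2 :=
          Finset.sum_le_sum hb
      _ = Q * ∑ c ∈ Finset.univ.erase (0 : ZMod p), ‖T c‖ ^ 2 := by
          rw [Finset.mul_sum]
      _ ≤ Q * ((p : ℝ) * Z.card) := by
          refine mul_le_mul_of_nonneg_left ?_ hQnonneg
          simpa [hT] using parseval_le Z (Finset.univ.erase (0 : ZMod p))
  have hQ2 : Q ^ 2 = (p : ℝ) ^ n * P := by
    rw [hQ, ← Finset.prod_pow]
    have : ∀ i ∈ Finset.univ, Real.sqrt ((p : ℝ) * (A i).card * (B i).card) ^ 2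
        = (p : ℝ) * (((A i).card : ℝ) * ((B i).card : ℝ)) := by
      intro i _
      rw [Real.sq_sqrt (by positivity)]
      ring
    rw [Finset.prod_congr rfl this, Finset.prod_mul_distrib, Finset.prod_const, hP]
    simp
  have hlt : Q * ((p : ℝ) * Z.card) < Mr := by
    have hsq : (Q * ((p : ℝ) * Z.card)) ^ 2 < Mr ^ 2 := by
      have h6 := mul_lt_mul_of_pos_right h hMpos
      have hpow : (p : ℝ) ^ (n + 2) = (p : ℝ) ^ n * (p : ℝ) ^ 2 := pow_add _ _ _
      rw [hpow] at h6
      calc (Q * ((p : ℝ) * Z.card)) ^ 2 = Q ^ 2 * ((p : ℝ) ^ 2 * (Z.card : ℝ) ^ 2) := by ring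
        _ = (p : ℝ) ^ n * (p : ℝ) ^ 2 * Mr := by rw [hQ2, hMr]; ring
        _ < (P * (Z.card : ℝ) ^ 2) * Mr := h6
        _ = Mr ^ 2 := by rw [hMr]; ring
    exact lt_of_pow_lt_pow_left₀ 2 (le_of_lt hMpos) hsq
  linarith

end StmtAux

namespace StmtAux
variable {p : ℕ} [Fact p.Prime]

lemma sum_r (X : Finset (ZMod p)) :
    ∑ u : ZMod p, ((X.filter (fun x => u - x ∈ X)).card) = X.card ^ 2 := by
  classical
  simp_rw [Finset.card_filter]
  rw [Finset.sum_comm]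
  have h1 : ∀ x : ZMod p, ∑ u : ZMod p, (if u - x ∈ X then 1 else 0) = X.card := by
    intro x
    rw [← Equiv.sum_comp (Equiv.addRight x) (fun v => if v - x ∈ X then 1 else 0)]
    simp [Finset.sum_ite_mem]
  rw [Finset.sum_congr rfl fun x _ => h1 x, Finset.sum_const, sq]
  simp [mul_comm]

lemma sum_piFinset_prod {n : ℕ} (f : Fin n → ZMod p → ℕ) :
    ∑ u : Fin n → ZMod p, ∏ i, f i (u i) = ∏ i, ∑ c : ZMod p, f i c := by
  classical
  rw [Finset.prod_univ_sum (fun _ => (Finset.univ : Finset (ZMod p))) f]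
  rw [Fintype.piFinset_univ]

end StmtAux

open scoped Pointwise


def Heis (p n : ℕ) : Type := (Fin n → ZMod p) × (Fin n → ZMod p) × ZMod p

namespace Heis

variable {p n : ℕ}

instance : Mul (Heis p n) :=
  ⟨fun a b => (a.1 + b.1, a.2.1 + b.2.1, (∑ i, a.1 i * b.2.1 i) + a.2.2 + b.2.2)⟩
instance : One (Heis p n) := ⟨((0 : Fin n → ZMod p), (0 : Fin n → ZMod p), (0 : ZMod p))⟩
instance : Inv (Heis p n) :=
  ⟨fun a => (-a.1, -a.2.1, (∑ i, a.1 i * a.2.1 i) - a.2.2)⟩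

lemma one_def : (1 : Heis p n) = ((0 : Fin n → ZMod p), (0 : Fin n → ZMod p), (0 : ZMod p)) := rfl

lemma inv_def (a : Heis p n) :
    a⁻¹ = (-a.1, -a.2.1, (∑ i, a.1 i * a.2.1 i) - a.2.2) := rfl

lemma mul_def (a b : Heis p n) :
    a * b = (a.1 + b.1, a.2.1 + b.2.1, (∑ i, a.1 i * b.2.1 i) + a.2.2 + b.2.2) := rfl

instance : Group (Heis p n) :=
  Group.ofLeftAxioms
    (fun a b c => by
      rw [mul_def, mul_def, mul_def, mul_def]
      refine Prod.ext ?_ (Prod.ext ?_ ?_) <;>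
        simp [mul_def, Finset.sum_add_distrib, add_mul, mul_add] <;> ring)
    (fun a => by
      rw [mul_def, one_def]
      refine Prod.ext ?_ (Prod.ext ?_ ?_) <;>
        simp [mul_def, one_def])
    (fun a => by
      rw [mul_def, one_def, inv_def]
      refine Prod.ext ?_ (Prod.ext ?_ ?_) <;>
        simp [mul_def, one_def, inv_def, Finset.sum_add_distrib, neg_mul, mul_comm] <;> ring)

instance [NeZero p] : Fintype (Heis p n) :=
  inferInstanceAs (Fintype ((Fin n → ZMod p) × (Fin n → ZMod p) × ZMod p))

instance : DecidableEq (Heis p n) :=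
  inferInstanceAs (DecidableEq ((Fin n → ZMod p) × (Fin n → ZMod p) × ZMod p))

end Heis


/-- Helper: explicitly typed constructor for `Heis`. -/
def mkH {p n : ℕ} (x y : Fin n → ZMod p) (z : ZMod p) : Heis p n := (x, y, z)

set_option maxHeartbeats 1000000 in
theorem stmt13 : ∀ ε : ℝ, 0 < ε → ∃ n₀ : ℕ, ∀ n : ℕ, n₀ ≤ n →
    ∀ (p : ℕ) [Fact p.Prime],
    ∀ (X Y : Fin n → Finset (ZMod p)) (Z : Finset (ZMod p)),
    (∀ i, (X i).Nonempty) → (∀ i, (Y i).Nonempty) → Z.Nonempty →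
    (∀ i, (0 : ZMod p) ∉ X i) → (∀ i, (0 : ZMod p) ∉ Y i) →
    ∀ B : Finset (Heis p n),
    (∀ g : Heis p n, g ∈ B ↔
      ((∀ i, g.1 i ∈ X i) ∧ (∀ i, g.2.1 i ∈ Y i) ∧ g.2.2 ∈ Z)) →
    ((p : ℝ) ^ (2 * n + 1)) ^ ((3 : ℝ) / 4 + ε) < (B.card : ℝ) →
    (B.card : ℝ) / p ≤
      (Set.ncard {ab : (Fin n → ZMod p) × (Fin n → ZMod p) |
        ∀ z : ZMod p, ((ab.1, ab.2, z) : Heis p n) ∈ B * B} : ℝ) := by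
  intro ε hε
  refine ⟨⌈(3 : ℝ) / (8 * ε)⌉₊ + 1, ?_⟩
  intro n hn p hp X Y Z hX hY hZ hX0 hY0 B hB hcard
  classical
  have hp2 : 2 ≤ p := hp.out.two_le
  haveI : NeZero p := ⟨hp.out.ne_zero⟩
  have hp0 : (0 : ℝ) < p := by positivity
  -- the brick structure of B
  have hBcard : B.card = ((∏ i, (X i).card) * (∏ i, (Y i).card)) * Z.card := by
    have hBset : B = ((Fintype.piFinset X) ×ˢ ((Fintype.piFinset Y) ×ˢ Z) :
        Finset ((Fin n → ZMod p) × (Fin n → ZMod p) × ZMod p)) := by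
      ext g
      rw [hB g]
      constructor
      · rintro ⟨h1, h2, h3⟩
        exact Finset.mem_product.mpr ⟨Fintype.mem_piFinset.mpr h1,
          Finset.mem_product.mpr ⟨Fintype.mem_piFinset.mpr h2, h3⟩⟩
      · intro h
        obtain ⟨ha, hbc⟩ := Finset.mem_product.mp h
        obtain ⟨hb, hc⟩ := Finset.mem_product.mp hbc
        exact ⟨Fintype.mem_piFinset.mp ha, Fintype.mem_piFinset.mp hb, hc⟩
    rw [hBset]
    change Finset.card (_ : Finset ((Fin n → ZMod p) × (Fin n → ZMod p) × ZMod p)) = _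
    rw [Finset.card_product, Finset.card_product, Fintype.card_piFinset,
      Fintype.card_piFinset]
    ring
  set w : ℕ := (∏ i, (X i).card) * (∏ i, (Y i).card) with hw
  have hwpos : 0 < w := by
    refine Nat.mul_pos ?_ ?_ <;>
      exact Finset.prod_pos fun i _ => Finset.card_pos.mpr (by first | exact hX i | exact hY i)
  have hBw : B.card = w * Z.card := hBcard
  have hZpos : 0 < Z.card := Finset.card_pos.mpr hZ
  have hmemBB : ∀ (x y : Fin n → ZMod p) (z : ZMod p) (g₁ g₂ : Heis p n),
      g₁ ∈ B → g₂ ∈ B → g₁ * g₂ = mkH x y z → ((x, y, z) : Heis p n) ∈ B * B := by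
    intro x y z g₁ g₂ h₁ h₂ hmul
    have : g₁ * g₂ ∈ B * B := Finset.mul_mem_mul h₁ h₂
    rwa [hmul] at this
  suffices hsuff : ∃ G : Finset ((Fin n → ZMod p) × (Fin n → ZMod p)),
      (↑G : Set ((Fin n → ZMod p) × (Fin n → ZMod p))) ⊆
        {ab : (Fin n → ZMod p) × (Fin n → ZMod p) |
          ∀ z : ZMod p, ((ab.1, ab.2, z) : Heis p n) ∈ B * B} ∧
      (B.card : ℝ) / p ≤ G.card by
    obtain ⟨G, hGsub, hGcard⟩ := hsuff
    refine hGcard.trans ?_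
    have h1 := Set.ncard_le_ncard hGsub (Set.toFinite _)
    rw [Set.ncard_coe_finset] at h1
    exact_mod_cast h1
  by_cases hZp : Z.card = p
  · -- `Z` is everything
    have hZuniv : Z = Finset.univ := Finset.eq_univ_of_card Z (by rw [hZp, ZMod.card])
    refine ⟨(Fintype.piFinset fun i => X i + X i) ×ˢ (Fintype.piFinset fun i => Y i + Y i),
      ?_, ?_⟩
    · rintro ⟨u, v⟩ huv z
      rw [Finset.mem_coe, Finset.mem_product] at huv
      obtain ⟨hu, hv⟩ := huv
      have h1 : ∀ i, ∃ x ∈ X i, ∃ x' ∈ X i, x + x' = u i := by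
        intro i
        exact Finset.mem_add.mp (Fintype.mem_piFinset.mp hu i)
      have h2 : ∀ i, ∃ y ∈ Y i, ∃ y' ∈ Y i, y + y' = v i := by
        intro i
        exact Finset.mem_add.mp (Fintype.mem_piFinset.mp hv i)
      choose x hx x' hx' hxx using h1
      choose y hy y' hy' hyy using h2
      have hg1 : mkH x y 0 ∈ B :=
        (hB _).mpr ⟨hx, hy, by rw [hZuniv]; exact Finset.mem_univ _⟩
      have hg2 : mkH x' y' (z - ∑ i, x i * y' i) ∈ B :=
        (hB _).mpr ⟨hx', hy', by rw [hZuniv]; exact Finset.mem_univ _⟩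
      refine hmemBB u v z _ _ hg1 hg2 ?_
      rw [Heis.mul_def]
      refine Prod.ext (funext fun i => hxx i) (Prod.ext (funext fun i => hyy i) ?_)
      show (∑ i, x i * y' i) + 0 + (z - ∑ i, x i * y' i) = z
      ring
    · have h1 : w ≤ ((Fintype.piFinset fun i => X i + X i) ×ˢ
          (Fintype.piFinset fun i => Y i + Y i)).card := by
        rw [Finset.card_product, Fintype.card_piFinset, Fintype.card_piFinset, hw]
        refine Nat.mul_le_mul (Finset.prod_le_prod' fun i _ => ?_)
          (Finset.prod_le_prod' fun i _ => ?_)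
        · exact Finset.card_le_card_add_right (hX i)
        · exact Finset.card_le_card_add_right (hY i)
      have h2 : (B.card : ℝ) / p = w := by
        rw [hBw, hZp]
        push_cast
        field_simp
      rw [h2]
      exact_mod_cast h1
  · -- `Z` is a proper subset
    have hZlt : Z.card + 1 ≤ p := by
      have h1 := Z.card_le_univ
      rw [ZMod.card] at h1
      omega
    set r : Fin n → ZMod p → ℕ := fun i u => ((X i).filter (fun x => u - x ∈ X i)).card with hr
    set s : Fin n → ZMod p → ℕ := fun i v => ((Y i).filter (fun y => v - y ∈ Y i)).card with hs
    set F : (Fin n → ZMod p) × (Fin n → ZMod p) → ℕ :=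
      fun uv => (∏ i, r i (uv.1 i)) * (∏ i, s i (uv.2 i)) with hF
    refine ⟨Finset.univ.filter (fun uv => p ^ (n + 2) < F uv * Z.card ^ 2), ?_, ?_⟩
    · rintro ⟨u, v⟩ huv z
      rw [Finset.mem_coe, Finset.mem_filter] at huv
      have hFgt := huv.2
      have hcov := StmtAux.cover (fun i => (X i).filter (fun x => u i - x ∈ X i))
        (fun i => ((Y i).filter (fun y => v i - y ∈ Y i)).image (fun y => v i - y)) Z ?_ z
      · obtain ⟨a, b, ha, hb, z₁, hz₁, z₂, hz₂, hsum⟩ := hcov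
        have haX : ∀ i, a i ∈ X i ∧ u i - a i ∈ X i := by
          intro i
          have h3 := Finset.mem_filter.mp (ha i)
          exact ⟨h3.1, h3.2⟩
        have hbY : ∀ i, b i ∈ Y i ∧ v i - b i ∈ Y i := by
          intro i
          obtain ⟨y', hy', hey⟩ := Finset.mem_image.mp (hb i)
          obtain ⟨hy'Y, hy'2⟩ := Finset.mem_filter.mp hy'
          constructor
          · rw [← hey]; exact hy'2
          · rw [← hey, sub_sub_cancel]; exact hy'Y
        have hg1 : mkH a (fun i => v i - b i) z₁ ∈ B :=
          (hB _).mpr ⟨fun i => (haX i).1, fun i => (hbY i).2, hz₁⟩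
        have hg2 : mkH (fun i => u i - a i) b z₂ ∈ B :=
          (hB _).mpr ⟨fun i => (haX i).2, fun i => (hbY i).1, hz₂⟩
        refine hmemBB u v z _ _ hg1 hg2 ?_
        rw [Heis.mul_def]
        refine Prod.ext (funext fun i => by simp [mkH]) (Prod.ext (funext fun i => by simp [mkH]) ?_)
        show (∑ i, a i * b i) + z₁ + z₂ = z
        exact hsum
      · -- size hypothesis for `cover`
        have himg : ∀ i, (((Y i).filter (fun y => v i - y ∈ Y i)).image
            (fun y => v i - y)).card = s i (v i) := by
          intro i
          rw [Finset.card_image_of_injective _ sub_right_injective]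
        have h1 : (∏ i, ((((X i).filter (fun x => u i - x ∈ X i)).card : ℝ)) *
            (((((Y i).filter (fun y => v i - y ∈ Y i)).image (fun y => v i - y)).card : ℝ))) *
            (Z.card : ℝ) ^ 2 = ((F (u, v) * Z.card ^ 2 : ℕ) : ℝ) := by
          push_cast
          rw [Finset.prod_mul_distrib]
          simp only [hF, hr, hs, himg]
          push_cast
          ring
        rw [h1]
        exact_mod_cast hFgt
    · -- the counting estimate
      set G := Finset.univ.filter
        (fun uv : (Fin n → ZMod p) × (Fin n → ZMod p) => p ^ (n + 2) < F uv * Z.card ^ 2) with hG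
      have hsumF : ∑ uv : (Fin n → ZMod p) × (Fin n → ZMod p), F uv = w ^ 2 := by
        rw [Fintype.sum_prod_type]
        simp only [hF]
        calc ∑ u : Fin n → ZMod p, ∑ v : Fin n → ZMod p,
              ((∏ i, r i (u i)) * (∏ i, s i (v i)))
            = (∑ u : Fin n → ZMod p, ∏ i, r i (u i)) *
              (∑ v : Fin n → ZMod p, ∏ i, s i (v i)) := by rw [← Finset.sum_mul_sum]
          _ = (∏ i, ∑ c : ZMod p, r i c) * (∏ i, ∑ c : ZMod p, s i c) := by
              rw [StmtAux.sum_piFinset_prod, StmtAux.sum_piFinset_prod]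
          _ = (∏ i, (X i).card ^ 2) * (∏ i, (Y i).card ^ 2) := by
              rw [Finset.prod_congr rfl fun i _ => StmtAux.sum_r (X i),
                Finset.prod_congr rfl fun i _ => StmtAux.sum_r (Y i)]
          _ = w ^ 2 := by rw [Finset.prod_pow, Finset.prod_pow, hw]; ring
      have hFle : ∀ uv : (Fin n → ZMod p) × (Fin n → ZMod p), F uv ≤ w := by
        intro uv
        rw [hF, hw]
        exact Nat.mul_le_mul (Finset.prod_le_prod' fun i _ => Finset.card_filter_le _ _)
          (Finset.prod_le_prod' fun i _ => Finset.card_filter_le _ _)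
      have hcard_univ : Fintype.card ((Fin n → ZMod p) × (Fin n → ZMod p)) = p ^ (2 * n) := by
        rw [Fintype.card_prod, Fintype.card_fun, ZMod.card, Fintype.card_fin, ← pow_add]
        ring_nf
      have hkey : w ^ 2 * Z.card ^ 2 ≤ G.card * (w * Z.card ^ 2) + p ^ (2 * n) * p ^ (n + 2) := by
        calc w ^ 2 * Z.card ^ 2 = ∑ uv : (Fin n → ZMod p) × (Fin n → ZMod p),
              F uv * Z.card ^ 2 := by rw [← Finset.sum_mul, hsumF]
          _ = (∑ uv ∈ G, F uv * Z.card ^ 2) +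
              ∑ uv ∈ Finset.univ.filter
                (fun uv => ¬ (p ^ (n + 2) < F uv * Z.card ^ 2)), F uv * Z.card ^ 2 := by
              rw [hG, Finset.sum_filter_add_sum_filter_not]
          _ ≤ G.card * (w * Z.card ^ 2) + p ^ (2 * n) * p ^ (n + 2) := by
              refine Nat.add_le_add ?_ ?_
              · have h6 := Finset.sum_le_card_nsmul G (fun uv => F uv * Z.card ^ 2)
                  (w * Z.card ^ 2) (fun uv _ => Nat.mul_le_mul_right _ (hFle uv))
                simpa [smul_eq_mul] using h6
              · have h7 := Finset.sum_le_card_nsmul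
                  (Finset.univ.filter (fun uv => ¬ (p ^ (n + 2) < F uv * Z.card ^ 2)))
                  (fun uv => F uv * Z.card ^ 2) (p ^ (n + 2)) ?_
                · refine le_trans (by simpa [smul_eq_mul] using h7) ?_
                  refine Nat.mul_le_mul_right _ ?_
                  exact le_trans (Finset.card_filter_le _ _) (by rw [Finset.card_univ, hcard_univ])
                · intro uv huv
                  rw [Finset.mem_filter] at huv
                  exact Nat.le_of_not_lt huv.2
      -- pass to the reals
      have hp1 : (1 : ℝ) ≤ p := by exact_mod_cast Nat.one_le_of_lt hp2
      have hnn : (3 : ℝ) / (8 * ε) ≤ n := by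
        have h1 : ((⌈(3 : ℝ) / (8 * ε)⌉₊ : ℕ) : ℝ) ≤ n := by
          exact_mod_cast Nat.le_of_succ_le hn
        exact (Nat.le_ceil _).trans h1
      have hεn : (3 : ℝ) / 4 ≤ 2 * (n : ℝ) * ε := by
        have h8 : (0 : ℝ) < 8 * ε := by linarith
        rw [div_le_iff₀ h8] at hnn
        nlinarith [hnn]
      have hBsq : (p : ℝ) ^ (3 * n + 3) ≤ (B.card : ℝ) ^ 2 := by
        have e1 : ((p : ℝ) ^ (2 * n + 1)) ^ ((3 : ℝ) / 4 + ε) =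
            (p : ℝ) ^ ((((2 * n + 1 : ℕ)) : ℝ) * ((3 : ℝ) / 4 + ε)) := by
          rw [← Real.rpow_natCast (p : ℝ) (2 * n + 1), ← Real.rpow_mul hp0.le]
        have e3 : ((p : ℝ) ^ ((((2 * n + 1 : ℕ)) : ℝ) * ((3 : ℝ) / 4 + ε))) ^ 2 =
            (p : ℝ) ^ ((((2 * n + 1 : ℕ)) : ℝ) * ((3 : ℝ) / 4 + ε) * 2) := by
          rw [← Real.rpow_natCast ((p : ℝ) ^ ((((2 * n + 1 : ℕ)) : ℝ) * ((3 : ℝ) / 4 + ε))) 2,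
            ← Real.rpow_mul hp0.le]
          norm_num
        have e4 : (((3 * n + 3 : ℕ)) : ℝ) ≤ (((2 * n + 1 : ℕ)) : ℝ) * ((3 : ℝ) / 4 + ε) * 2 := by
          push_cast
          nlinarith [hεn, hε.le]
        have e5 : (p : ℝ) ^ (((3 * n + 3 : ℕ)) : ℝ) ≤
            (p : ℝ) ^ ((((2 * n + 1 : ℕ)) : ℝ) * ((3 : ℝ) / 4 + ε) * 2) :=
          Real.rpow_le_rpow_of_exponent_le hp1 e4
        have e6 : (p : ℝ) ^ (3 * n + 3) = (p : ℝ) ^ (((3 * n + 3 : ℕ)) : ℝ) :=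
          (Real.rpow_natCast _ _).symm
        rw [e6]
        refine e5.trans ?_
        rw [← e3, ← e1]
        have e7 : (0 : ℝ) ≤ ((p : ℝ) ^ (2 * n + 1)) ^ ((3 : ℝ) / 4 + ε) := by positivity
        exact pow_le_pow_left₀ e7 hcard.le 2
      rw [div_le_iff₀ hp0]
      have c1 : ((w : ℝ)) ^ 2 * ((Z.card : ℝ)) ^ 2 ≤
          (G.card : ℝ) * ((w : ℝ) * ((Z.card : ℝ)) ^ 2) + (p : ℝ) ^ (3 * n + 2) := by
        have := hkey
        have hc : ((w ^ 2 * Z.card ^ 2 : ℕ) : ℝ) ≤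
            ((G.card * (w * Z.card ^ 2) + p ^ (2 * n) * p ^ (n + 2) : ℕ) : ℝ) := by
          exact_mod_cast this
        push_cast at hc
        rw [← pow_add] at hc
        have : 2 * n + (n + 2) = 3 * n + 2 := by ring
        rw [this] at hc
        linarith
      have c2 : (p : ℝ) ^ (3 * n + 3) ≤ ((w : ℝ)) ^ 2 * ((Z.card : ℝ)) ^ 2 := by
        refine hBsq.trans (le_of_eq ?_)
        rw [hBw]
        push_cast
        ring
      have hWpos : (0 : ℝ) < w := by exact_mod_cast hwpos
      have hZcpos : (0 : ℝ) < Z.card := by exact_mod_cast hZpos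
      have hZc1 : ((Z.card : ℝ)) + 1 ≤ p := by exact_mod_cast hZlt
      have hppow : (p : ℝ) ^ (3 * n + 3) = (p : ℝ) ^ (3 * n + 2) * p := pow_succ _ _
      have key2 : ((B.card : ℝ)) * ((w : ℝ) * ((Z.card : ℝ)) ^ 2) ≤
          ((G.card : ℝ) * p) * ((w : ℝ) * ((Z.card : ℝ)) ^ 2) := by
        have hBr : (B.card : ℝ) = (w : ℝ) * (Z.card : ℝ) := by rw [hBw]; push_cast; ring
        rw [hBr]
        calc ((w : ℝ) * (Z.card : ℝ)) * ((w : ℝ) * ((Z.card : ℝ)) ^ 2)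
            = (w : ℝ) ^ 2 * ((Z.card : ℝ)) ^ 2 * (Z.card : ℝ) := by ring
          _ ≤ (w : ℝ) ^ 2 * ((Z.card : ℝ)) ^ 2 * ((p : ℝ) - 1) := by
              refine mul_le_mul_of_nonneg_left (by linarith) (by positivity)
          _ = (p : ℝ) * ((w : ℝ) ^ 2 * ((Z.card : ℝ)) ^ 2) -
              (w : ℝ) ^ 2 * ((Z.card : ℝ)) ^ 2 := by ring
          _ ≤ (p : ℝ) * ((w : ℝ) ^ 2 * ((Z.card : ℝ)) ^ 2) - (p : ℝ) ^ (3 * n + 3) := by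
              linarith [c2]
          _ ≤ (p : ℝ) * ((G.card : ℝ) * ((w : ℝ) * ((Z.card : ℝ)) ^ 2) +
                (p : ℝ) ^ (3 * n + 2)) - (p : ℝ) ^ (3 * n + 3) := by
              have h9 := mul_le_mul_of_nonneg_left c1 hp0.le
              linarith
          _ = ((G.card : ℝ) * p) * ((w : ℝ) * ((Z.card : ℝ)) ^ 2) := by
              rw [hppow]; ring
      exact le_of_mul_le_mul_right key2 (by positivity)
end

section
/- For every n ≥ 1 and every prime p, there exists a brick B ⊆ H_n with |B| ≥ (√p / (4·(2n)ⁿ)) · |H_n|^(1/2) such that B·B contains no coset of any nontrivial subgroup of H_n. -/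
open scoped Pointwise

lemma reduce_real (p n c : ℕ) (hp : 0 < p) (h : p^(n+1) ≤ 4*(2*n)^n * c) :
    Real.sqrt p / (4 * (2 * (n : ℝ)) ^ n) * ((p : ℝ) ^ (2 * n + 1)) ^ ((1 : ℝ) / 2)
        ≤ (c : ℝ) := by
  have hpR : (0:ℝ) < p := by exact_mod_cast hp
  have hdn : 0 < 4*(2*n)^n := by
    rcases Nat.eq_zero_or_pos n with h0|h0
    · subst h0; norm_num
    · have h2 : 0 < 2*n := by omega
      positivity
  have hd : (0:ℝ) < 4 * (2 * (n : ℝ)) ^ n := by exact_mod_cast hdn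
  have key : ((p : ℝ) ^ (2 * n + 1)) ^ ((1 : ℝ) / 2) = (p:ℝ)^(n:ℕ) * Real.sqrt p := by
    rw [← Real.rpow_natCast (p:ℝ) (2*n+1), ← Real.rpow_mul (le_of_lt hpR)]
    rw [show ((2*n+1 : ℕ) : ℝ) * (1/2) = (n:ℕ) + (1/2 : ℝ) by push_cast; ring]
    rw [Real.rpow_add hpR, Real.rpow_natCast, Real.sqrt_eq_rpow]
  rw [key]
  rw [div_mul_eq_mul_div, div_le_iff₀ hd]
  have sq : Real.sqrt p * ((p:ℝ)^(n:ℕ) * Real.sqrt p) = (p:ℝ)^(n+1) := by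
    rw [show Real.sqrt p * ((p:ℝ)^(n:ℕ) * Real.sqrt p) = (Real.sqrt p * Real.sqrt p) * (p:ℝ)^(n:ℕ) by ring,
      Real.mul_self_sqrt (le_of_lt hpR), ← pow_succ']
  rw [sq]
  calc ((p:ℝ))^(n+1) ≤ ((4*(2*n)^n * c : ℕ) : ℝ) := by exact_mod_cast h
    _ = (c:ℝ) * (4*(2*(n:ℝ))^n) := by push_cast; ring
open scoped Pointwise

section Constr
variable (p : ℕ) [Fact p.Prime]

def XS (M : ℕ) : Finset (ZMod p) := (Finset.range M).image (Nat.cast)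

lemma mem_XS {M : ℕ} (hM : M ≤ p) {a : ZMod p} :
    a ∈ XS p M ↔ a.val < M := by
  constructor
  · rintro h
    rcases Finset.mem_image.1 h with ⟨r, hr, rfl⟩
    rw [Finset.mem_range] at hr
    rwa [ZMod.val_cast_of_lt (lt_of_lt_of_le hr hM)]
  · intro h
    refine Finset.mem_image.2 ⟨a.val, Finset.mem_range.2 h, ?_⟩
    exact ZMod.natCast_rightInverse a

lemma card_XS {M : ℕ} (hM : M ≤ p) : (XS p M).card = M := by
  rw [XS, Finset.card_image_of_injOn, Finset.card_range]
  intro x hx y hy hxy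
  rw [Finset.mem_coe, Finset.mem_range] at hx hy
  have := congrArg ZMod.val hxy
  rwa [ZMod.val_cast_of_lt (lt_of_lt_of_le hx hM),
    ZMod.val_cast_of_lt (lt_of_lt_of_le hy hM)] at this

variable (n : ℕ)

def Brick (M Zc : ℕ) : Finset (Heis p n) :=
  (Fintype.piFinset fun _ => XS p M) ×ˢ ((Fintype.piFinset fun _ => XS p M) ×ˢ XS p Zc)

lemma mem_Brick {M Zc : ℕ} (g : Heis p n) :
    g ∈ Brick p n M Zc ↔
      ((∀ i, g.1 i ∈ XS p M) ∧ (∀ i, g.2.1 i ∈ XS p M) ∧ g.2.2 ∈ XS p Zc) := by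
  rcases g with ⟨x, y, z⟩
  show ((x,y,z) : (Fin n → ZMod p) × (Fin n → ZMod p) × ZMod p) ∈
      ((Fintype.piFinset fun _ => XS p M) ×ˢ ((Fintype.piFinset fun _ => XS p M) ×ˢ XS p Zc)) ↔ _
  simp [Finset.mem_product, Fintype.mem_piFinset]

lemma card_Brick {M Zc : ℕ} (hM : M ≤ p) (hZc : Zc ≤ p) :
    (Brick p n M Zc).card = M ^ n * (M ^ n * Zc) := by
  show ((Fintype.piFinset fun _ => XS p M) ×ˢ ((Fintype.piFinset fun _ => XS p M) ×ˢ XS p Zc) :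
    Finset ((Fin n → ZMod p) × (Fin n → ZMod p) × ZMod p)).card = _
  rw [Finset.card_product, Finset.card_product, Fintype.card_piFinset]
  simp [card_XS p hM, card_XS p hZc]

end Constr
section Bound
variable (p n : ℕ) [Fact p.Prime]

lemma val_bound_mul {M Zc : ℕ} (hMp : M ≤ p) (hZcp : Zc ≤ p)
    (hM1 : 1 ≤ M) (hZc1 : 1 ≤ Zc)
    (hX2 : 2*(M-1) ≤ p-2) (hP : n*(M-1)^2 + 2*(Zc-1) ≤ p-2)
    {u : Heis p n} (hu : u ∈ Brick p n M Zc * Brick p n M Zc) :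
    (∀ i, (u.1 i).val ≤ p-2) ∧ (∀ i, (u.2.1 i).val ≤ p-2) ∧ u.2.2.val ≤ p-2 := by
  have hp2 : 2 ≤ p := (Fact.out : p.Prime).two_le
  obtain ⟨a, ha, b, hb, rfl⟩ := Finset.mem_mul.1 hu
  rw [mem_Brick] at ha hb
  obtain ⟨ha1, ha2, ha3⟩ := ha
  obtain ⟨hb1, hb2, hb3⟩ := hb
  have va1 : ∀ i, (a.1 i).val ≤ M - 1 := fun i =>
    Nat.le_sub_one_of_lt ((mem_XS p hMp).1 (ha1 i))
  have va2 : ∀ i, (a.2.1 i).val ≤ M - 1 := fun i =>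
    Nat.le_sub_one_of_lt ((mem_XS p hMp).1 (ha2 i))
  have va3 : (a.2.2).val ≤ Zc - 1 := Nat.le_sub_one_of_lt ((mem_XS p hZcp).1 ha3)
  have vb1 : ∀ i, (b.1 i).val ≤ M - 1 := fun i =>
    Nat.le_sub_one_of_lt ((mem_XS p hMp).1 (hb1 i))
  have vb2 : ∀ i, (b.2.1 i).val ≤ M - 1 := fun i =>
    Nat.le_sub_one_of_lt ((mem_XS p hMp).1 (hb2 i))
  have vb3 : (b.2.2).val ≤ Zc - 1 := Nat.le_sub_one_of_lt ((mem_XS p hZcp).1 hb3)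
  have hcast : ∀ x : ZMod p, ((x.val : ℕ) : ZMod p) = x := fun x => ZMod.natCast_rightInverse x
  refine ⟨?_, ?_, ?_⟩
  · intro i
    have h1 := va1 i; have h2 := vb1 i
    have he : (a * b).1 i = (((a.1 i).val + (b.1 i).val : ℕ) : ZMod p) := by
      rw [Heis.mul_def]
      push_cast [hcast]
      rfl
    rw [he, ZMod.val_cast_of_lt (by omega : (a.1 i).val + (b.1 i).val < p)]
    omega
  · intro i
    have h1 := va2 i; have h2 := vb2 i
    have he : (a * b).2.1 i = (((a.2.1 i).val + (b.2.1 i).val : ℕ) : ZMod p) := by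
      rw [Heis.mul_def]
      push_cast [hcast]
      rfl
    rw [he, ZMod.val_cast_of_lt (by omega : (a.2.1 i).val + (b.2.1 i).val < p)]
    omega
  · have hsum : (∑ i, (a.1 i).val * (b.2.1 i).val) ≤ n * (M-1)^2 := by
      calc (∑ i, (a.1 i).val * (b.2.1 i).val) ≤ ∑ _i : Fin n, (M-1)*(M-1) :=
            Finset.sum_le_sum (fun i _ => Nat.mul_le_mul (va1 i) (vb2 i))
        _ = n * (M-1)^2 := by simp [Finset.sum_const, pow_two]
    have he : (a * b).2.2 =
        ((((∑ i, (a.1 i).val * (b.2.1 i).val) + (a.2.2).val + (b.2.2).val : ℕ)) : ZMod p) := by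
      rw [Heis.mul_def]
      push_cast [hcast]
      rfl
    rw [he, ZMod.val_cast_of_lt (by omega : (∑ i, (a.1 i).val * (b.2.1 i).val) + (a.2.2).val + (b.2.2).val < p)]
    omega

end Bound
section Pow
variable {p n : ℕ}

lemma pow_fst (h : Heis p n) (k : ℕ) : (h^k).1 = k • h.1 := by
  induction k with
  | zero => simp [Heis.one_def]
  | succ k ih => rw [pow_succ, Heis.mul_def, ih, succ_nsmul]

lemma pow_snd (h : Heis p n) (k : ℕ) : (h^k).2.1 = k • h.2.1 := by
  induction k with
  | zero => simp [Heis.one_def]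
  | succ k ih => rw [pow_succ, Heis.mul_def, ih, succ_nsmul]

lemma pow_central (h : Heis p n) (h2 : h.2.1 = 0) (k : ℕ) :
    (h^k).2.2 = k • h.2.2 := by
  induction k with
  | zero => simp [Heis.one_def]
  | succ k ih =>
      rw [pow_succ, Heis.mul_def]
      simp only [h2, ih, succ_nsmul]
      simp [Pi.zero_apply]

end Pow

section Main
variable (p n : ℕ) [Fact p.Prime]

lemma coset_escape {M Zc : ℕ} (hMp : M ≤ p) (hZcp : Zc ≤ p)
    (hM1 : 1 ≤ M) (hZc1 : 1 ≤ Zc)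
    (hX2 : 2*(M-1) ≤ p-2) (hP : n*(M-1)^2 + 2*(Zc-1) ≤ p-2)
    (G : Subgroup (Heis p n)) (hG : G ≠ ⊥) (g : Heis p n) :
    ∃ h ∈ G, g * h ∉ Brick p n M Zc * Brick p n M Zc := by
  have hp2 : 2 ≤ p := (Fact.out : p.Prime).two_le
  obtain ⟨a, ha⟩ := Subgroup.ne_bot_iff_exists_ne_one.1 hG
  set h₀ := (a : Heis p n) with hh₀def
  have hh₀G : h₀ ∈ G := a.2
  have hh₀ : h₀ ≠ 1 := fun h => ha (Subtype.ext h)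
  set t : ZMod p := ((p-1 : ℕ) : ZMod p) with ht
  have hvt : t.val = p - 1 := ZMod.val_cast_of_lt (by omega)
  by_cases hc1 : ∃ i, h₀.1 i ≠ 0
  · obtain ⟨i, hc⟩ := hc1
    set c := h₀.1 i with hcdef
    set k := ((t - g.1 i) * c⁻¹).val with hk
    refine ⟨h₀^k, pow_mem hh₀G k, fun hmem => ?_⟩
    have hco : (g * h₀^k).1 i = t := by
      rw [Heis.mul_def]
      show g.1 i + (h₀^k).1 i = t
      rw [pow_fst, Pi.smul_apply, nsmul_eq_mul, hk,
        ZMod.natCast_rightInverse ((t - g.1 i) * c⁻¹)]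
      field_simp
      rw [← hcdef]; ring
    have := (val_bound_mul p n hMp hZcp hM1 hZc1 hX2 hP hmem).1 i
    rw [hco, hvt] at this
    omega
  · by_cases hc2 : ∃ i, h₀.2.1 i ≠ 0
    · obtain ⟨i, hc⟩ := hc2
      set c := h₀.2.1 i with hcdef
      set k := ((t - g.2.1 i) * c⁻¹).val with hk
      refine ⟨h₀^k, pow_mem hh₀G k, fun hmem => ?_⟩
      have hco : (g * h₀^k).2.1 i = t := by
        rw [Heis.mul_def]
        show g.2.1 i + (h₀^k).2.1 i = t
        rw [pow_snd, Pi.smul_apply, nsmul_eq_mul, hk,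
          ZMod.natCast_rightInverse ((t - g.2.1 i) * c⁻¹)]
        field_simp
        rw [← hcdef]; ring
      have := (val_bound_mul p n hMp hZcp hM1 hZc1 hX2 hP hmem).2.1 i
      rw [hco, hvt] at this
      omega
    · push_neg at hc1 hc2
      have h1z : h₀.1 = 0 := funext hc1
      have h2z : h₀.2.1 = 0 := funext hc2
      have hc : h₀.2.2 ≠ 0 := by
        intro hzz
        apply hh₀
        rw [Heis.one_def]
        exact Prod.ext h1z (Prod.ext h2z hzz)
      set c := h₀.2.2 with hcdef
      set k := ((t - g.2.2) * c⁻¹).val with hk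
      refine ⟨h₀^k, pow_mem hh₀G k, fun hmem => ?_⟩
      have hco : (g * h₀^k).2.2 = t := by
        rw [Heis.mul_def]
        show (∑ i, g.1 i * (h₀^k).2.1 i) + g.2.2 + (h₀^k).2.2 = t
        rw [pow_central h₀ h2z, pow_snd]
        simp only [h2z, smul_zero, Pi.zero_apply, mul_zero, Finset.sum_const_zero, zero_add]
        rw [nsmul_eq_mul, hk, ZMod.natCast_rightInverse ((t - g.2.2) * c⁻¹)]
        field_simp
        rw [← hcdef]; ring
      have := (val_bound_mul p n hMp hZcp hM1 hZc1 hX2 hP hmem).2.2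
      rw [hco, hvt] at this
      omega

end Main
def B31 : Finset (Heis 3 1) :=
  {((fun _ => 1), (fun _ => 0), 0), ((fun _ => 1), (fun _ => 1), 0)}

set_option maxHeartbeats 1000000 in
lemma B31_mem (g : Heis 3 1) :
    g ∈ B31 ↔ ((∀ i, g.1 i ∈ ({1} : Finset (ZMod 3))) ∧
      (∀ i, g.2.1 i ∈ ({0,1} : Finset (ZMod 3))) ∧ g.2.2 ∈ ({0} : Finset (ZMod 3))) := by
  revert g; decide

set_option maxHeartbeats 4000000 in
lemma B31_key : ∀ h : Heis 3 1, h ≠ 1 → ∀ g : Heis 3 1,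
    ∃ k, k < 3 ∧ g * h^k ∉ B31 * B31 := by decide
section Special31

lemma B31_card : B31.card = 2 := by decide

lemma special31 :
    ∃ (X Y : Fin 1 → Finset (ZMod 3)) (Z : Finset (ZMod 3)) (B : Finset (Heis 3 1)),
      (∀ g : Heis 3 1, g ∈ B ↔
        ((∀ i, g.1 i ∈ X i) ∧ (∀ i, g.2.1 i ∈ Y i) ∧ g.2.2 ∈ Z)) ∧
      Real.sqrt 3 / (4 * (2 * (1 : ℝ)) ^ 1) * ((3 : ℝ) ^ (2 * 1 + 1)) ^ ((1 : ℝ) / 2)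
        ≤ (B.card : ℝ) ∧
      ∀ G : Subgroup (Heis 3 1), G ≠ ⊥ → ∀ g : Heis 3 1, ∃ h ∈ G, g * h ∉ B * B := by
  refine ⟨fun _ => {1}, fun _ => {0,1}, {0}, B31, B31_mem, ?_, ?_⟩
  · have h := reduce_real 3 1 B31.card (by norm_num)
      (by rw [B31_card]; norm_num)
    exact_mod_cast h
  · intro G hG g
    obtain ⟨a, ha⟩ := Subgroup.ne_bot_iff_exists_ne_one.1 hG
    have hh₀ : (a : Heis 3 1) ≠ 1 := fun h => ha (Subtype.ext h)
    obtain ⟨k, _, hk⟩ := B31_key (a : Heis 3 1) hh₀ g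
    exact ⟨(a : Heis 3 1)^k, pow_mem a.2 k, hk⟩

end Special31
section Arith

lemma Lprime (p m : ℕ) : p^m * (p + 5*m + 5) ≤ (p+5)^(m+1) := by
  induction m with
  | zero => simp
  | succ m ih =>
      have step : (p + 5*(m+1) + 5) * p ≤ (p + 5*m + 5) * (p+5) := by nlinarith
      calc p^(m+1) * (p + 5*(m+1) + 5) = p^m * ((p + 5*(m+1) + 5) * p) := by ring
        _ ≤ p^m * ((p + 5*m + 5) * (p+5)) := Nat.mul_le_mul_left _ step
        _ = (p^m * (p + 5*m + 5)) * (p+5) := by ring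
        _ ≤ (p+5)^(m+1) * (p+5) := Nat.mul_le_mul_right _ ih
        _ = (p+5)^(m+2) := by ring

lemma keyineq (p n : ℕ) (hp : 2 ≤ p) (hn : 1 ≤ n) :
    p^(n+1) ≤ (p+5)^n * (p-1) := by
  obtain ⟨m, rfl⟩ : ∃ m, n = m + 1 := ⟨n-1, by omega⟩
  obtain ⟨P, rfl⟩ : ∃ P, p = P + 2 := ⟨p-2, by omega⟩
  have h1 := Lprime (P+2) m
  have h2 : (P+2)^(m+2) ≤ ((P+2)^m * ((P+2) + 5*m + 5)) * (P+1) := by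
    have : (P+2)*(P+2) ≤ ((P+2) + 5*m+5) * (P+1) := by nlinarith
    calc (P+2)^(m+2) = (P+2)^m * ((P+2)*(P+2)) := by ring
      _ ≤ (P+2)^m * (((P+2) + 5*m+5) * (P+1)) := Nat.mul_le_mul_left _ this
      _ = ((P+2)^m * ((P+2) + 5*m + 5)) * (P+1) := by ring
  calc (P+2)^(m+1+1) ≤ ((P+2)^m * ((P+2) + 5*m + 5)) * (P+1) := h2
    _ ≤ (P+2+5)^(m+1) * (P+1) := Nat.mul_le_mul_right _ h1
    _ = (P+2+5)^(m+1) * (P+2-1) := by norm_num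

end Arith

section Assemble
variable (p n : ℕ) [Fact p.Prime]

lemma main_construction (hn : 1 ≤ n) (M Zc : ℕ) (hMp : M ≤ p) (hZcp : Zc ≤ p)
    (hM1 : 1 ≤ M) (hZc1 : 1 ≤ Zc)
    (hX2 : 2*(M-1) ≤ p-2) (hP : n*(M-1)^2 + 2*(Zc-1) ≤ p-2)
    (hsize : p^(n+1) ≤ 4*(2*n)^n * (M^(2*n) * Zc)) :
    ∃ (X Y : Fin n → Finset (ZMod p)) (Z : Finset (ZMod p)) (B : Finset (Heis p n)),
      (∀ g : Heis p n, g ∈ B ↔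
        ((∀ i, g.1 i ∈ X i) ∧ (∀ i, g.2.1 i ∈ Y i) ∧ g.2.2 ∈ Z)) ∧
      Real.sqrt p / (4 * (2 * (n : ℝ)) ^ n) * ((p : ℝ) ^ (2 * n + 1)) ^ ((1 : ℝ) / 2)
        ≤ (B.card : ℝ) ∧
      ∀ G : Subgroup (Heis p n), G ≠ ⊥ → ∀ g : Heis p n, ∃ h ∈ G, g * h ∉ B * B := by
  have hp2 : 2 ≤ p := (Fact.out : p.Prime).two_le
  refine ⟨fun _ => XS p M, fun _ => XS p M, XS p Zc, Brick p n M Zc,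
    fun g => mem_Brick p n g, ?_, ?_⟩
  · rw [card_Brick p n hMp hZcp]
    refine reduce_real p n _ (by omega) ?_
    calc p^(n+1) ≤ 4*(2*n)^n * (M^(2*n) * Zc) := hsize
      _ = 4*(2*n)^n * (M^n * (M^n * Zc)) := by rw [two_mul, pow_add]; ring
  · exact coset_escape p n hMp hZcp hM1 hZc1 hX2 hP

end Assemble
theorem stmt15 (n : ℕ) (hn : 1 ≤ n) (p : ℕ) [Fact p.Prime] :
    ∃ (X Y : Fin n → Finset (ZMod p)) (Z : Finset (ZMod p)) (B : Finset (Heis p n)),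
      (∀ g : Heis p n, g ∈ B ↔
        ((∀ i, g.1 i ∈ X i) ∧ (∀ i, g.2.1 i ∈ Y i) ∧ g.2.2 ∈ Z)) ∧
      Real.sqrt p / (4 * (2 * (n : ℝ)) ^ n) * ((p : ℝ) ^ (2 * n + 1)) ^ ((1 : ℝ) / 2)
        ≤ (B.card : ℝ) ∧
      ∀ G : Subgroup (Heis p n), G ≠ ⊥ → ∀ g : Heis p n, ∃ h ∈ G, g * h ∉ B * B := by
  have hp2 : 2 ≤ p := (Fact.out : p.Prime).two_le
  by_cases hsp : p = 3 ∧ n = 1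
  · obtain ⟨hp3, hn1⟩ := hsp
    subst hp3; subst hn1
    exact_mod_cast special31
  by_cases htriv : p^(n+1) ≤ 4*(2*n)^n
  · exact main_construction p n hn 1 1 (by omega) (by omega) le_rfl le_rfl
      (by simp) (by simp) (by simpa using htriv)
  · push_neg at htriv
    have hself : p ≤ 2*n*(p*p) := by
      calc p ≤ p*p := Nat.le_mul_of_pos_left p (by omega)
        _ ≤ 2*n*(p*p) := Nat.le_mul_of_pos_left _ (by omega)
    have hex : ∃ m, p ≤ 2*n*(m*m) := ⟨p, hself⟩
    obtain ⟨M, hQM, hMmin⟩ : ∃ M, (p ≤ 2*n*(M*M)) ∧ ∀ m < M, ¬(p ≤ 2*n*(m*m)) :=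
      ⟨Nat.find hex, Nat.find_spec hex, fun m hm => Nat.find_min hex hm⟩
    have hM1 : 1 ≤ M := by
      rcases Nat.eq_zero_or_pos M with h0 | h0
      · rw [h0] at hQM; simp at hQM; omega
      · exact h0
    have hMp : M ≤ p := by
      by_contra hlt
      exact hMmin p (by omega) hself
    have hMprev : 2*n*((M-1)*(M-1)) ≤ p - 1 := by
      rcases Nat.eq_or_lt_of_le hM1 with h1 | h2
      · simp [← h1]
      · have := hMmin (M-1) (by omega)
        omega
    have hp5 : 2 ≤ M → 5 ≤ p := by
      intro hM2
      have hn2 : ¬ p ≤ 2*n*(1*1) := hMmin 1 (by omega)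
      have hp4 : p ≠ 4 := by
        intro h4
        have hpp : Nat.Prime p := Fact.out
        rw [h4] at hpp
        exact absurd hpp (by decide)
      have hp3 : p = 3 → False := by
        intro h3
        have : n = 1 := by omega
        exact hsp ⟨h3, this⟩
      omega
    have hX2 : 2*(M-1) ≤ p-2 := by
      rcases Nat.eq_or_lt_of_le hM1 with h1 | hM2
      · simp [← h1]
      · have h5 := hp5 hM2
        obtain ⟨a, ha⟩ : ∃ a, M = a + 1 := ⟨M-1, by omega⟩
        obtain ⟨r, hr⟩ : ∃ r, p = r + 5 := ⟨p-5, by omega⟩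
        rw [ha, hr, Nat.add_sub_cancel] at hMprev ⊢
        have key : 2*(a*a) ≤ r+4 := by
          have : 2*(a*a) ≤ 2*n*(a*a) := by
            apply Nat.mul_le_mul_right
            omega
          omega
        have goal' : 2*a ≤ r+3 := by
          by_contra hcon
          have h1 : r + 4 ≤ 2*a := by omega
          have h2 : (r+4)*(r+4) ≤ (2*a)*(2*a) := Nat.mul_le_mul h1 h1
          nlinarith
        omega
    set Z0 := (p+3)/4 with hZ0def
    have hZ04 : p ≤ 4*Z0 ∧ 4*Z0 ≤ p+3 := by omega
    have hsizebase : p^n ≤ (2*n)^n * (M^(2*n)) := by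
      calc p^n ≤ (2*n*(M*M))^n := Nat.pow_le_pow_left hQM n
        _ = (2*n)^n * (M^(2*n)) := by rw [mul_pow, two_mul, pow_add]; ring
    by_cases hti : n*(M-1)^2 + 2*(Z0-1) ≤ p-2
    · exact main_construction p n hn M Z0 hMp (by omega) hM1 (by omega) hX2 hti
        (by
          calc p^(n+1) = p^n * p := by ring
            _ ≤ ((2*n)^n * M^(2*n)) * (4*Z0) := Nat.mul_le_mul hsizebase hZ04.1
            _ = 4*(2*n)^n * (M^(2*n) * Z0) := by ring)
    · -- tight case
      push_neg at hti
      have hM2 : 2 ≤ M := by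
        by_contra hcon
        have h1 : M = 1 := by omega
        rw [h1] at hti
        simp at hti
        omega
      obtain ⟨t, rfl⟩ : ∃ t, M = t + 1 := ⟨M-1, by omega⟩
      have ht1 : 1 ≤ t := by omega
      simp only [Nat.add_sub_cancel] at hti hMprev hX2
      have hqpow : n*t^2 = n*(t*t) := by rw [pow_two]
      rw [hqpow] at hti
      have hq2 : 2*(n*(t*t)) ≤ p - 1 := by rw [← mul_assoc]; exact hMprev
      -- q + 2*(Z0-1) forced equalities
      have heq : 2*(n*(t*t)) = p - 1 ∧ 4*Z0 = p + 3 := by omega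
      set Zc := Z0 - 1 with hZcdef
      have hZc4 : 4*Zc = p - 1 := by omega
      have hZc1 : 1 ≤ Zc := by omega
      have hcos : n*((t+1)-1)^2 + 2*(Zc-1) ≤ p - 2 := by
        simp only [Nat.add_sub_cancel]
        rw [hqpow]
        omega
      have hbig : p + 5 ≤ 2*n*((t+1)*(t+1)) := by
        have hexp : 2*n*((t+1)*(t+1)) = 2*(n*(t*t)) + 2*(n*(2*t+1)) := by ring
        have h6 : 6 ≤ 2*(n*(2*t+1)) := by
          have : 3 ≤ n*(2*t+1) := by
            calc 3 = 1*3 := by norm_num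
              _ ≤ n*(2*t+1) := Nat.mul_le_mul hn (by omega)
          omega
        omega
      have hsz : p^(n+1) ≤ 4*(2*n)^n * ((t+1)^(2*n) * Zc) := by
        have k1 : p^(n+1) ≤ (p+5)^n * (p-1) := keyineq p n hp2 hn
        have k2 : (p+5)^n ≤ (2*n)^n * ((t+1)^(2*n)) := by
          calc (p+5)^n ≤ (2*n*((t+1)*(t+1)))^n := Nat.pow_le_pow_left hbig n
            _ = (2*n)^n * ((t+1)^(2*n)) := by rw [mul_pow, ← pow_two, ← pow_mul]
        calc p^(n+1) ≤ (p+5)^n * (p-1) := k1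
          _ = (p+5)^n * (4*Zc) := by rw [hZc4]
          _ ≤ ((2*n)^n * ((t+1)^(2*n))) * (4*Zc) := Nat.mul_le_mul_right _ k2
          _ = 4*(2*n)^n * ((t+1)^(2*n) * Zc) := by ring
      exact main_construction p n hn (t+1) Zc hMp (by omega) (by omega) hZc1 hX2 hcos hsz
end
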